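/- Suppose Assumptions 1–3 hold for the resource allocation game: each f_ij is convex and continuously differentiable with ∇f_ij Lipschitz of constant l_ij; the pseudo-gradient P is strongly monotone with constant μ > 0; each L_i is the Laplacian of a connected undirected graph on coalition i. Let M ∈ ℝ^{n_sum²×n_sum²} be such that I − M is nonsingular, and for each i let C_i ∈ ℝ^{n_i×n_i} be row-stochastic with positive diagonal entries and, off the diagonal, positive entries exactly on the edges of the connected subgraph G_i. Let L̆_i = diag{(L_i)_1,…,(L_i)_{n_i}} ∈ ℝ^{n_i×n_i²} where (L_i)_j is the j-th row of L_i, and Q̄_i(ξ_i) = (1/n_i) Σ_{j=1}^{n_i} (∂f_ij/∂x_i)(ξ_ij) where ξ_i stacks ξ_ij ∈ ℝ^{n_sum}. Suppose x(∞) ∈ Ω, ψ_i(∞) ∈ ℝ^{n_i²} (i = 1,…,N), and ξ(∞) ∈ ℝ^{n_sum²} (stacking ξ_ij(∞) over all agents) satisfy the steady-state equations: L̆_i ψ_i(∞) = 0 for all i; ψ_i(∞) = (C_i ⊗ I_{n_i}) ψ_i(∞) for all i; (I − M)(ξ(∞) − 1_{n_sum} ⊗ x(∞)) = 0; and (1/n_i)(1_{n_i}ᵀ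 ⊗ I_{n_i}) ψ_i(∞) = Q̄_i(ξ_i(∞)) for all i. Then ξ(∞) = 1_{n_sum} ⊗ x(∞), ψ_i(∞) = 1_{n_i} ⊗ ((1/n_i)(∂f_i/∂x_i)(x(∞))) for all i, L_i (∂f_i/∂x_i)(x(∞)) = 0 for all i, and consequently x(∞) is the (unique) Nash equilibrium x* of the game. -/

import Mathlib

noncomputable section
open Matrix Kronecker
open scoped RealInnerProductSpace

/-- The collective decision space: coalition `i` has block `ℝ^{n i}`. -/
abbrev Vec (N : ℕ) (n : Fin N → ℕ) := PiLp 2 (fun i : Fin N => EuclideanSpace ℝ (Fin (n i)))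

/-- Agents, indexed by coalition and position within the coalition. -/
abbrev Agent (N : ℕ) (n : Fin N → ℕ) := Σ i : Fin N, Fin (n i)

/-- The stacked estimation vector `ξ ∈ ℝ^{n_sum²}`. -/
abbrev Est (N : ℕ) (n : Fin N → ℕ) := EuclideanSpace ℝ (Agent N n × Agent N n)

variable {N : ℕ} {n : Fin N → ℕ}

/-- Agent `a`'s estimate of the collective decision, as an element of the decision space. -/
def toVec (ξ : Est N n) (a : Agent N n) : Vec N n :=
  WithLp.toLp 2 (fun p => WithLp.toLp 2 (fun q => ξ (a, ⟨p, q⟩)))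

/-- `1_{n_sum} ⊗ x ∈ ℝ^{n_sum²}`. -/
def onesKronFull (x : Vec N n) : Est N n :=
  WithLp.toLp 2 (fun ac : Agent N n × Agent N n => x ac.2.1 ac.2.2)

/-- Coalition-level objective `f_i = ∑_j f_ij`. -/
def coalObj (f : ∀ i : Fin N, Fin (n i) → Vec N n → ℝ) (i : Fin N) (x : Vec N n) : ℝ :=
  ∑ j, f i j x

/-- The gradient of `f_i` with respect to its own block `x_i`, i.e. `∂f_i/∂x_i`. -/
def blockGrad (f : ∀ i : Fin N, Fin (n i) → Vec N n → ℝ) (i : Fin N) (x : Vec N n) :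
    EuclideanSpace ℝ (Fin (n i)) :=
  WithLp.toLp 2 (fun j => gradient (coalObj f i) x i j)

/-- The pseudo-gradient `P(x) = (∂f_1/∂x_1(x), …, ∂f_N/∂x_N(x))`. -/
def pseudoGrad (f : ∀ i : Fin N, Fin (n i) → Vec N n → ℝ) (x : Vec N n) : Vec N n :=
  WithLp.toLp 2 (fun i => blockGrad f i x)

/-- Nash equilibrium of the resource allocation game. -/
def IsNE (f : ∀ i : Fin N, Fin (n i) → Vec N n → ℝ) (R : Fin N → ℝ) (x : Vec N n) : Prop :=
  (∀ i, ∑ j, x i j = R i) ∧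
  ∀ (i : Fin N) (y : EuclideanSpace ℝ (Fin (n i))), (∑ j, y j = R i) →
    coalObj f i x ≤ coalObj f i (WithLp.toLp 2 (Function.update x.ofLp i y))

/-- `L̆_i = diag{(L_i)_1,…,(L_i)_{n_i}} ∈ ℝ^{n_i × n_i²}`. -/
def Lbreve (L : ∀ i : Fin N, Matrix (Fin (n i)) (Fin (n i)) ℝ) (i : Fin N) :
    Matrix (Fin (n i)) (Fin (n i) × Fin (n i)) ℝ :=
  Matrix.of fun j lm => if j = lm.1 then L i j lm.2 else 0


section Aux
open Filter
open scoped Topology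

variable {F : Type*} [NormedAddCommGroup F] [InnerProductSpace ℝ F] [CompleteSpace F]

lemma my_gradient_sum {ι : Type*} (s : Finset ι) (g : ι → F → ℝ) (x : F)
    (h : ∀ j ∈ s, DifferentiableAt ℝ (g j) x) :
    gradient (fun y => ∑ j ∈ s, g j y) x = ∑ j ∈ s, gradient (g j) x := by
  unfold gradient
  rw [fderiv_fun_sum h, map_sum]

lemma my_hasDerivAt_line (f : F → ℝ) (x d : F) (hf : DifferentiableAt ℝ f x) :
    HasDerivAt (fun t : ℝ => f (x + t • d)) ⟪gradient f x, d⟫ 0 := by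
  have hline : HasDerivAt (fun t : ℝ => x + t • d) d 0 := by
    simpa using ((hasDerivAt_id (0:ℝ)).smul_const d).const_add x
  have hfd : HasFDerivAt f (fderiv ℝ f x) (x + (0:ℝ) • d) := by
    simpa using hf.hasFDerivAt
  have h2 := hfd.comp_hasDerivAt 0 hline
  have hinner : fderiv ℝ f x d = ⟪gradient f x, d⟫ := by
    rw [gradient]
    simp [InnerProductSpace.toDual_symm_apply]
  rw [← hinner]
  exact h2

lemma my_convex_grad_le {f : F → ℝ} (hc : ConvexOn ℝ Set.univ f)
    (x y : F) (hd : DifferentiableAt ℝ f x) :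
    f x + ⟪gradient f x, y - x⟫ ≤ f y := by
  have hder := my_hasDerivAt_line f x (y - x) hd
  have htend : Tendsto (slope (fun t : ℝ => f (x + t • (y - x))) 0) (𝓝[>] 0)
      (𝓝 ⟪gradient f x, y - x⟫) :=
    (hasDerivAt_iff_tendsto_slope.mp hder).mono_left
      (nhdsWithin_mono _ (fun t ht => ne_of_gt ht))
  have key : ⟪gradient f x, y - x⟫ ≤ f y - f x := by
    refine le_of_tendsto htend ?_
    filter_upwards [Ioc_mem_nhdsGT_of_mem (by norm_num : (0:ℝ) ∈ Set.Ico 0 1)] with t ht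
    have ht0 : (0:ℝ) < t := ht.1
    have hcomb : x + t • (y - x) = (1 - t) • x + t • y := by module
    have hcv := hc.2 (Set.mem_univ x) (Set.mem_univ y) (by linarith [ht.2] : (0:ℝ) ≤ 1 - t)
      (le_of_lt ht0) (by ring)
    rw [slope_def_field]
    have hb : f (x + t • (y - x)) ≤ (1 - t) * f x + t * f y := by
      rw [hcomb]; simpa [smul_eq_mul] using hcv
    have hg0 : f (x + (0:ℝ) • (y - x)) = f x := by simp
    rw [sub_zero, div_le_iff₀ ht0, hg0]
    linarith
  linarith

lemma my_convexOn_sum {ι : Type*} (s : Finset ι) (g : ι → F → ℝ)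
    (h : ∀ j ∈ s, ConvexOn ℝ Set.univ (g j)) :
    ConvexOn ℝ Set.univ (fun y => ∑ j ∈ s, g j y) := by
  induction s using Finset.cons_induction with
  | empty => simpa using convexOn_const (0:ℝ) convex_univ
  | cons a s ha ih =>
    simp only [Finset.sum_cons]
    exact (h a (Finset.mem_cons_self a s)).add (ih fun j hj => h j (Finset.mem_cons_of_mem hj))

end Aux

lemma my_stoch_fixed_const {m : ℕ} (G : SimpleGraph (Fin m)) (hconn : G.Connected)
    (C : Matrix (Fin m) (Fin m) ℝ) (hnn : ∀ j k, 0 ≤ C j k) (hrow : ∀ j, ∑ k, C j k = 1)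
    (hoff : ∀ j k, j ≠ k → (0 < C j k ↔ G.Adj j k))
    (v : Fin m → ℝ) (hv : C.mulVec v = v) (j k : Fin m) : v j = v k := by
  haveI : Nonempty (Fin m) := hconn.nonempty
  obtain ⟨j0, -, hj0⟩ := Finset.exists_max_image Finset.univ v
    ⟨Classical.arbitrary _, Finset.mem_univ _⟩
  set M := v j0 with hM
  have hle : ∀ l, v l ≤ M := fun l => hj0 l (Finset.mem_univ l)
  have step : ∀ a, v a = M → ∀ b, G.Adj a b → v b = M := by
    intro a ha b hab
    have hva : ∑ l, C a l * v l = v a := congrFun hv a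
    have h1 : ∑ l, C a l * (M - v l) = 0 := by
      have he : ∑ l, C a l * (M - v l) = M * (∑ l, C a l) - ∑ l, C a l * v l := by
        rw [Finset.mul_sum, ← Finset.sum_sub_distrib]
        exact Finset.sum_congr rfl fun l _ => by ring
      rw [he, hrow, hva, ha]; ring
    have h2 : ∀ l ∈ Finset.univ, C a l * (M - v l) = 0 :=
      (Finset.sum_eq_zero_iff_of_nonneg (fun l _ =>
        mul_nonneg (hnn a l) (by linarith [hle l]))).mp h1
    have hpos : 0 < C a b := (hoff a b hab.ne).mpr hab
    have h3 := h2 b (Finset.mem_univ b)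
    rcases mul_eq_zero.mp h3 with h | h
    · exact absurd h (ne_of_gt hpos)
    · linarith
  have key : ∀ (a b : Fin m), G.Walk a b → v a = M → v b = M := by
    intro a b w
    induction w with
    | nil => exact id
    | cons h p ih => exact fun ha => ih (step _ ha _ h)
  obtain ⟨wj⟩ := hconn j0 j
  obtain ⟨wk⟩ := hconn j0 k
  rw [key _ _ wj rfl, key _ _ wk rfl]

lemma vec_sum_apply {N : ℕ} {n : Fin N → ℕ} {α : Type*} (s : Finset α) (w : α → Vec N n)
    (i : Fin N) (m : Fin (n i)) : (∑ j ∈ s, w j) i m = ∑ j ∈ s, w j i m := by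
  induction s using Finset.cons_induction with
  | empty => rfl
  | cons a s ha ih => rw [Finset.sum_cons, Finset.sum_cons, ← ih]; rfl

/-- steady-state analysis, Sec. IV-B of the paper: any steady state of
the gradient-tracking DRA algorithm satisfies `ξ(∞) = 1 ⊗ x(∞)`,
`ψ_i(∞) = 1 ⊗ ((1/n_i)(∂f_i/∂x_i)(x(∞)))`, `L_i (∂f_i/∂x_i)(x(∞)) = 0`, and `x(∞)` is the
unique Nash equilibrium of the game. -/
theorem statement17
    (f : ∀ i : Fin N, Fin (n i) → Vec N n → ℝ)
    (l : ∀ i : Fin N, Fin (n i) → ℝ) (μ : ℝ) (R : Fin N → ℝ)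
    (L : ∀ i : Fin N, Matrix (Fin (n i)) (Fin (n i)) ℝ)
    -- Assumption 1
    (hconv : ∀ i j, ConvexOn ℝ Set.univ (f i j))
    (hdiff : ∀ i j, ContDiff ℝ 1 (f i j))
    (hlip : ∀ i j (a b : Vec N n),
      ‖gradient (f i j) a - gradient (f i j) b‖ ≤ l i j * ‖a - b‖)
    -- Assumption 2
    (hμ : 0 < μ)
    (hmono : ∀ a b : Vec N n,
      μ * ‖a - b‖ ^ 2 ≤ ⟪a - b, pseudoGrad f a - pseudoGrad f b⟫)
    -- Assumption 3: each `L_i` is the Laplacian of the connected subgraph `G_i`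
    (Gi : ∀ i : Fin N, SimpleGraph (Fin (n i)))
    (instGi : ∀ i, DecidableRel (Gi i).Adj)
    (hGiconn : ∀ i, (Gi i).Connected)
    (hL : ∀ i, L i = (Gi i).lapMatrix ℝ)
    -- `I − M` nonsingular
    (M : Matrix (Agent N n × Agent N n) (Agent N n × Agent N n) ℝ)
    (hM : IsUnit ((1 : Matrix (Agent N n × Agent N n) (Agent N n × Agent N n) ℝ) - M))
    -- `C_i` row-stochastic, positive diagonal, off-diagonal pattern = edges of `G_i`
    (C : ∀ i : Fin N, Matrix (Fin (n i)) (Fin (n i)) ℝ)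
    (hCnonneg : ∀ i j m, 0 ≤ C i j m)
    (hCrow : ∀ i j, ∑ m, C i j m = 1)
    (hCdiag : ∀ i j, 0 < C i j j)
    (hCoff : ∀ i (j m : Fin (n i)), j ≠ m → (0 < C i j m ↔ (Gi i).Adj j m))
    -- steady states
    (x : Vec N n) (ξ : Est N n) (ψ : ∀ i : Fin N, Fin (n i) × Fin (n i) → ℝ)
    (hfeas : ∀ i, ∑ j, x i j = R i)
    (hL0 : ∀ i, (Lbreve L i).mulVec (ψ i) = 0)
    (hCfix : ∀ i, (C i ⊗ₖ (1 : Matrix (Fin (n i)) (Fin (n i)) ℝ)).mulVec (ψ i) = ψ i)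
    (hMfix : ((1 : Matrix (Agent N n × Agent N n) (Agent N n × Agent N n) ℝ) - M).mulVec
        (ξ - onesKronFull x) = 0)
    (htrack : ∀ i (m : Fin (n i)),
      (1 / (n i : ℝ)) * ∑ j, ψ i (j, m)
        = (1 / (n i : ℝ)) * ∑ j, gradient (f i j) (toVec ξ ⟨i, j⟩) i m) :
    ξ = onesKronFull x ∧
    (∀ i jm, ψ i jm = (1 / (n i : ℝ)) * blockGrad f i x jm.2) ∧
    (∀ i, (L i).mulVec (blockGrad f i x) = 0) ∧
    IsNE f R x ∧
    (∀ y : Vec N n, IsNE f R y → y = x) := by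
  classical
  have hnei : ∀ i, Nonempty (Fin (n i)) := fun i => (hGiconn i).nonempty
  have hn : ∀ i, 0 < (n i : ℝ) := fun i => by
    exact_mod_cast Fin.pos_iff_nonempty.mpr (hnei i)
  have hdf : ∀ i j (y : Vec N n), DifferentiableAt ℝ (f i j) y :=
    fun i j y => ((hdiff i j).differentiable one_ne_zero).differentiableAt
  have hcoal : ∀ i, coalObj f i = fun y => ∑ j, f i j y := fun _ => rfl
  have hdcoal : ∀ i (y : Vec N n), DifferentiableAt ℝ (coalObj f i) y := by
    intro i y
    rw [hcoal]
    exact DifferentiableAt.fun_sum (fun j _ => hdf i j y)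
  have hbg : ∀ i (y : Vec N n) m, blockGrad f i y m = ∑ j, gradient (f i j) y i m := by
    intro i y m
    show gradient (coalObj f i) y i m = _
    rw [hcoal i, my_gradient_sum _ _ _ (fun j _ => hdf i j y), vec_sum_apply]
  -- Step 1 : ξ = 1 ⊗ x
  have hA : IsUnit ((1 : Matrix (Agent N n × Agent N n) (Agent N n × Agent N n) ℝ) - M).det :=
    (Matrix.isUnit_iff_isUnit_det _).mp hM
  have hsub : ξ - onesKronFull x = 0 := by
    have h2 := congrArg
      (fun w => ((1 : Matrix (Agent N n × Agent N n) (Agent N n × Agent N n) ℝ) - M)⁻¹.mulVec w)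
      hMfix
    have h3 : ξ.ofLp - (onesKronFull x).ofLp = 0 := by
      simpa [Matrix.mulVec_mulVec, Matrix.nonsing_inv_mul _ hA] using h2
    rw [← WithLp.ofLp_sub] at h3
    exact WithLp.ofLp_injective 2 h3
  have hξ : ξ = onesKronFull x := sub_eq_zero.mp hsub
  have htv : ∀ a : Agent N n, toVec ξ a = x := by
    intro a; rw [hξ]; rfl
  -- Step 2 : ψ is constant along its first index
  have hψc : ∀ i (m j k : Fin (n i)), ψ i (j, m) = ψ i (k, m) := by
    intro i m j k
    refine my_stoch_fixed_const (Gi i) (hGiconn i) (C i) (hCnonneg i) (hCrow i) (hCoff i)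
      (fun j => ψ i (j, m)) ?_ j k
    funext l
    have h := congrFun (hCfix i) (l, m)
    simpa [Matrix.mulVec, dotProduct, Fintype.sum_prod_type, Matrix.kroneckerMap_apply,
      Matrix.one_apply, mul_ite, ite_mul, mul_zero, zero_mul, mul_one,
      Finset.sum_ite_eq] using h
  -- Step 3 : value of ψ
  have hψval : ∀ i (jm : Fin (n i) × Fin (n i)),
      ψ i jm = (1 / (n i : ℝ)) * blockGrad f i x jm.2 := by
    rintro i ⟨j, m⟩
    have ht := htrack i m
    have hsum1 : ∑ j', ψ i (j', m) = (n i : ℝ) * ψ i (j, m) := by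
      rw [Finset.sum_congr rfl (fun j' _ => hψc i m j' j)]
      simp [Finset.sum_const, Finset.card_univ, mul_comm]
    have hsum2 : ∑ j', gradient (f i j') (toVec ξ ⟨i, j'⟩) i m = blockGrad f i x m := by
      rw [hbg]
      exact Finset.sum_congr rfl fun j' _ => by rw [htv]
    rw [hsum1, hsum2] at ht
    have hne : (n i : ℝ) ≠ 0 := ne_of_gt (hn i)
    field_simp at ht ⊢
    linarith
  -- Step 4 : L_i ∂f_i/∂x_i (x) = 0
  have hLg : ∀ i, (L i).mulVec (blockGrad f i x) = 0 := by
    intro i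
    funext jj
    have h := congrFun (hL0 i) jj
    have h' : ∑ m, L i jj m * ψ i (jj, m) = 0 := by
      simpa [Lbreve, Matrix.mulVec, dotProduct, Fintype.sum_prod_type_right,
        ite_mul, zero_mul, Finset.sum_ite_eq] using h
    simp only [hψval] at h'
    have hne : (n i : ℝ) ≠ 0 := ne_of_gt (hn i)
    have h2 : (1 / (n i : ℝ)) * ∑ m, L i jj m * blockGrad f i x m = 0 := by
      rw [Finset.mul_sum, ← h']
      exact Finset.sum_congr rfl fun m _ => by ring
    have h3 : ∑ m, L i jj m * blockGrad f i x m = 0 := by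
      rcases mul_eq_zero.mp h2 with h | h
      · exact absurd h (by simpa using hne)
      · exact h
    simpa [Matrix.mulVec, dotProduct] using h3
  -- constancy of the block gradient at x
  have hconstX : ∀ i (j k : Fin (n i)), blockGrad f i x j = blockGrad f i x k := by
    intro i j k
    have h0 : Matrix.toLin' ((Gi i).lapMatrix ℝ) (blockGrad f i x) = 0 := by
      rw [Matrix.toLin'_apply, ← hL i, hLg i]
    exact ((Gi i).lapMatrix_mulVec_eq_zero_iff_forall_reachable).mp
      (by rwa [Matrix.toLin'_apply] at h0) j k ((hGiconn i) j k)
  -- inner product formula on Vec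
  have hinnerVec : ∀ a b : Vec N n, ⟪a, b⟫ = ∑ i, ∑ q, a i q * b i q := by
    intro a b
    simp [PiLp.inner_apply, RCLike.inner_apply, conj_trivial]
    exact Finset.sum_congr rfl fun _ _ => Finset.sum_congr rfl fun _ _ => mul_comm _ _
  -- x is a NE
  have hNEx : IsNE f R x := by
    refine ⟨hfeas, ?_⟩
    intro i y hy
    have hcv : ConvexOn ℝ Set.univ (coalObj f i) := by
      rw [hcoal i]
      exact my_convexOn_sum _ _ (fun j _ => hconv i j)
    set u0 : Vec N n := WithLp.toLp 2 (Function.update x.ofLp i y) with hu0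
    have hkey := my_convex_grad_le hcv x u0 (hdcoal i x)
    have hz : ⟪gradient (coalObj f i) x, u0 - x⟫ = 0 := by
      rw [hinnerVec]
      rw [Finset.sum_eq_single i]
      · obtain ⟨j0⟩ := hnei i
        have hcq : ∀ q, gradient (coalObj f i) x i q = blockGrad f i x j0 :=
          fun q => hconstX i q j0
        have he : ∀ q, (u0 - x) i q = y q - x i q := by
          intro q
          rw [hu0]; simp
        calc ∑ q, gradient (coalObj f i) x i q * (u0 - x) i q
            = ∑ q, blockGrad f i x j0 * (y q - x i q) := by
              exact Finset.sum_congr rfl fun q _ => by rw [hcq q, he q]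
          _ = blockGrad f i x j0 * ((∑ q, y q) - ∑ q, x i q) := by
              rw [← Finset.mul_sum, Finset.sum_sub_distrib]
          _ = 0 := by rw [hy, hfeas i, sub_self, mul_zero]
      · intro p _ hp
        apply Finset.sum_eq_zero
        intro q _
        have hz0 : (u0 - x) p q = 0 := by
          rw [hu0]; simp [Function.update_of_ne hp]
        rw [hz0, mul_zero]
      · intro h; exact absurd (Finset.mem_univ i) h
    rw [hz] at hkey
    linarith
  -- first-order condition at any NE
  have hNEconst : ∀ (y : Vec N n), IsNE f R y → ∀ i (j k : Fin (n i)),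
      blockGrad f i y j = blockGrad f i y k := by
    intro y hy i j k
    by_cases hjk : j = k
    · rw [hjk]
    set d : EuclideanSpace ℝ (Fin (n i)) :=
      WithLp.toLp 2 (fun q => (if q = j then (1:ℝ) else 0) - (if q = k then 1 else 0)) with hd
    set u : Vec N n := WithLp.toLp 2 (Function.update (0 : Vec N n).ofLp i d) with hu
    have hupdate : ∀ t : ℝ, (WithLp.toLp 2 (Function.update y.ofLp i (y i + t • d)) : Vec N n)
        = y + t • u := by
      intro t; ext p : 1
      by_cases hp : p = i
      · subst hp
        simp [hu]
      · simp [hu, hp]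
    have hmin : IsLocalMin (fun t : ℝ => coalObj f i (y + t • u)) 0 := by
      apply Filter.Eventually.of_forall
      intro t
      have hsum : ∑ q, (y i + t • d) q = R i := by
        have : ∀ q, (y i + t • d) q = y i q + t * d q := fun q => rfl
        simp only [this]
        rw [Finset.sum_add_distrib, hy.1 i]
        simp [hd, Finset.mul_sum, mul_sub, Finset.sum_sub_distrib, Finset.sum_ite_eq]
      have h5 := hy.2 i (y i + t • d) hsum
      rw [hupdate t] at h5
      simpa using h5
    have hder := my_hasDerivAt_line (coalObj f i) y u (hdcoal i y)
    have h0 := hmin.hasDerivAt_eq_zero hder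
    rw [hinnerVec] at h0
    rw [Finset.sum_eq_single i] at h0
    · have hui : ∀ q, u i q = (if q = j then (1:ℝ) else 0) - (if q = k then 1 else 0) := by
        intro q; simp [hu, hd]
      have : ∑ q, gradient (coalObj f i) y i q * u i q
          = blockGrad f i y j - blockGrad f i y k := by
        simp only [hui]
        rw [Finset.sum_congr rfl (fun q _ => by split_ifs <;> ring :
          ∀ q ∈ Finset.univ, gradient (coalObj f i) y i q *
            ((if q = j then (1:ℝ) else 0) - (if q = k then 1 else 0))
            = (if q = j then gradient (coalObj f i) y i q else 0)
              - (if q = k then gradient (coalObj f i) y i q else 0))]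
        rw [Finset.sum_sub_distrib]
        simp [Finset.sum_ite_eq']
        rfl
      rw [this] at h0
      linarith
    · intro p _ hp
      apply Finset.sum_eq_zero
      intro q _
      have : u p q = 0 := by
        simp [hu, Function.update_of_ne hp]
      rw [this, mul_zero]
    · intro h; exact absurd (Finset.mem_univ i) h
  -- uniqueness
  have huniq : ∀ y : Vec N n, IsNE f R y → y = x := by
    intro y hy
    have hinz : ⟪y - x, pseudoGrad f y - pseudoGrad f x⟫ = 0 := by
      rw [hinnerVec]
      apply Finset.sum_eq_zero
      intro i _
      obtain ⟨j0⟩ := hnei i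
      have h1 : ∀ q, blockGrad f i y q = blockGrad f i y j0 := fun q => hNEconst y hy i q j0
      have h2 : ∀ q, blockGrad f i x q = blockGrad f i x j0 := fun q => hconstX i q j0
      have he : ∀ q, (y - x) i q * (pseudoGrad f y - pseudoGrad f x) i q
          = (y i q - x i q) * (blockGrad f i y j0 - blockGrad f i x j0) := by
        intro q
        have e1 : (y - x) i q = y i q - x i q := by
          rw [PiLp.sub_apply, PiLp.sub_apply]
        have e2 : (pseudoGrad f y - pseudoGrad f x) i q
            = blockGrad f i y q - blockGrad f i x q := by
          rw [PiLp.sub_apply, PiLp.sub_apply]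
          rfl
        rw [e1, e2, h1 q, h2 q]
      rw [Finset.sum_congr rfl (fun q _ => he q), ← Finset.sum_mul, Finset.sum_sub_distrib,
        hy.1 i, hfeas i, sub_self, zero_mul]
    have hm := hmono y x
    rw [hinz] at hm
    have hsq : ‖y - x‖ ^ 2 = 0 := by nlinarith [sq_nonneg ‖y - x‖]
    have hnorm : ‖y - x‖ = 0 := by
      exact pow_eq_zero_iff (two_ne_zero) |>.mp hsq
    exact sub_eq_zero.mp (norm_eq_zero.mp hnorm)
  exact ⟨hξ, hψval, hLg, hNEx, huniq⟩
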